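/- For a closed subset Γ of Φ, the pattern subgroup M(Γ) is abelian if and only if Γ contains no chain, i.e., there are no (α,β),(β,γ) both in Γ. -/

import Mathlib

namespace McLain

/-- The endomorphism ring of the free right `R`-module on `Λ`. -/
abbrev E (R : Type*) [Ring R] (Λ : Type*) := Module.End Rᵐᵒᵖ (Λ →₀ R)

/-- Left multiplication by `r`, as an endomorphism of the right `R`-module `R`. -/
def lmul {R : Type*} [Ring R] (r : R) : R →ₗ[Rᵐᵒᵖ] R where
  toFun s := r * s
  map_add' := fun a b => mul_add r a b
  map_smul' := fun m s => by
    simp [MulOpposite.smul_eq_mul_unop, mul_assoc]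

/-- The endomorphism corresponding to `r e_{αβ}`. -/
noncomputable def elt {R : Type*} [Ring R] {Λ : Type*} (α β : Λ) (r : R) : E R Λ :=
  (Finsupp.lsingle α).comp ((lmul r).comp (Finsupp.lapply β))

/-- The unit `1 + r e_{αβ}` of `E`, for `α < β` (its inverse is `1 - r e_{αβ}`). -/
noncomputable def rootUnit {R : Type*} [Ring R] {Λ : Type*} [PartialOrder Λ]
    {α β : Λ} (h : α < β) (r : R) : (E R Λ)ˣ where
  val := 1 + elt α β r
  inv := 1 + elt α β (-r)
  val_inv := by
    apply LinearMap.ext; intro x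
    simp [elt, lmul, Module.End.mul_apply, Finsupp.single_apply, h.ne, mul_add, add_assoc]
  inv_val := by
    apply LinearMap.ext; intro x
    simp [elt, lmul, Module.End.mul_apply, Finsupp.single_apply, h.ne, mul_add, add_assoc]

/-- The pattern subgroup `M(Γ) = ⟨M_{αβ} : (α,β) ∈ Γ⟩`. -/
noncomputable def patternSubgroup (R : Type*) [Ring R] (Λ : Type*) [PartialOrder Λ]
    (Γ : Set (Λ × Λ)) : Subgroup (E R Λ)ˣ :=
  Subgroup.closure {u | ∃ (α β : Λ) (h : α < β), (α, β) ∈ Γ ∧ ∃ r : R, u = rootUnit h r}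


/-- A subset `Γ ⊆ Φ` is closed if `(α,β),(β,γ) ∈ Γ` implies `(α,γ) ∈ Γ`. -/
def IsClosedSubset {Λ : Type*} [PartialOrder Λ] (Γ : Set (Λ × Λ)) : Prop :=
  ∀ α β γ : Λ, (α, β) ∈ Γ → (β, γ) ∈ Γ → (α, γ) ∈ Γ

section Aux

variable {R : Type*} [Ring R] {Λ : Type*}

lemma elt_mul_elt [DecidableEq Λ] (α β γ δ : Λ) (r s : R) :
    (elt α β r : E R Λ) * elt γ δ s = if β = γ then elt α δ (r * s) else 0 := by
  apply LinearMap.ext; intro x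
  by_cases h : β = γ
  · simp [elt, lmul, Module.End.mul_apply, Finsupp.single_apply, h, mul_assoc]
  · simp only [elt, lmul, Module.End.mul_apply, LinearMap.coe_comp, Function.comp_apply,
      Finsupp.lapply_apply, Finsupp.lsingle_apply, LinearMap.coe_mk, AddHom.coe_mk,
      Finsupp.single_apply, LinearMap.zero_apply]
    rw [if_neg (fun h' => h h'.symm), if_neg h]
    simp

lemma elt_ne_zero [Nontrivial R] (α β : Λ) : (elt α β (1:R) : E R Λ) ≠ 0 := by
  intro h
  have := congrFun (congrArg DFunLike.coe h) (Finsupp.single β 1)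
  simp [elt, lmul] at this

lemma rootUnit_val [PartialOrder Λ] {α β : Λ} (h : α < β) (r : R) :
    (rootUnit h r : (E R Λ)ˣ).val = 1 + elt α β r := rfl

end Aux

/-- For a closed `Γ ⊆ Φ`, the pattern subgroup `M(Γ)` is abelian
if and only if `Γ` contains no chain `(α,β),(β,γ)`. -/
theorem patternSubgroup_isCommutative_iff (R : Type*) [Ring R] [Nontrivial R]
    (Λ : Type*) [PartialOrder Λ] (Γ : Set (Λ × Λ))
    (hΦ : Γ ⊆ {p : Λ × Λ | p.1 < p.2}) (hΓ : IsClosedSubset Γ) :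
    IsMulCommutative (patternSubgroup R Λ Γ) ↔
      ∀ α β γ : Λ, (α, β) ∈ Γ → (β, γ) ∈ Γ → False := by
  classical
  constructor
  · rintro ⟨h⟩ α β γ hab hbc
    have hαβ : α < β := hΦ hab
    have hβγ : β < γ := hΦ hbc
    have hαγ : α < γ := hαβ.trans hβγ
    have hu : rootUnit hαβ (1:R) ∈ patternSubgroup R Λ Γ :=
      Subgroup.subset_closure ⟨α, β, hαβ, hab, 1, rfl⟩
    have hv : rootUnit hβγ (1:R) ∈ patternSubgroup R Λ Γ :=
      Subgroup.subset_closure ⟨β, γ, hβγ, hbc, 1, rfl⟩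
    have hcomm := h.comm (⟨_, hu⟩ : patternSubgroup R Λ Γ) ⟨_, hv⟩
    have hval : (rootUnit hαβ (1:R)).val * (rootUnit hβγ (1:R)).val =
        (rootUnit hβγ (1:R)).val * (rootUnit hαβ (1:R)).val := by
      have := congrArg (fun x : patternSubgroup R Λ Γ => ((x : (E R Λ)ˣ) : E R Λ)) hcomm
      simpa using this
    rw [rootUnit_val, rootUnit_val, add_mul, mul_add, mul_add, add_mul, mul_add, mul_add,
      elt_mul_elt, elt_mul_elt] at hval
    rw [if_pos rfl, if_neg (fun h' : γ = α => hαγ.ne h'.symm)] at hval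
    simp only [one_mul, mul_one, add_zero] at hval
    have h0 : (elt α γ (1:R) : E R Λ) = 0 := by
      have h' := sub_eq_zero_of_eq hval
      rw [show (1 : E R Λ) + elt β γ 1 + (elt α β 1 + elt α γ 1)
          - (1 + elt α β 1 + elt β γ 1) = elt α γ 1 by abel] at h'
      exact h'
    exact elt_ne_zero α γ h0
  · intro hchain
    constructor
    constructor
    intro a b
    apply Subtype.ext
    have key : ∀ u ∈ {u : (E R Λ)ˣ | ∃ (α β : Λ) (h : α < β), (α, β) ∈ Γ ∧ ∃ r : R, u = rootUnit h r},
        ∀ v ∈ {u : (E R Λ)ˣ | ∃ (α β : Λ) (h : α < β), (α, β) ∈ Γ ∧ ∃ r : R, u = rootUnit h r},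
        Commute u v := by
      rintro u ⟨α, β, hab, habΓ, r, rfl⟩ v ⟨γ, δ, hgd, hgdΓ, s, rfl⟩
      apply Units.ext
      show (rootUnit hab r).val * (rootUnit hgd s).val = (rootUnit hgd s).val * (rootUnit hab r).val
      rw [rootUnit_val, rootUnit_val, add_mul, mul_add, mul_add, add_mul, mul_add, mul_add,
        elt_mul_elt, elt_mul_elt]
      rw [if_neg (fun h' : β = γ => hchain α β δ habΓ (h' ▸ hgdΓ)),
        if_neg (fun h' : δ = α => hchain γ δ β hgdΓ (h' ▸ habΓ))]
      simp only [one_mul, mul_one, add_zero]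
      abel
    have := Subgroup.closure_induction₂
      (k := {u : (E R Λ)ˣ | ∃ (α β : Λ) (h : α < β), (α, β) ∈ Γ ∧ ∃ r : R, u = rootUnit h r})
      (p := fun x y _ _ => Commute x y)
      (fun x y hx hy => key x hx y hy)
      (fun x _ => Commute.one_left x) (fun x _ => Commute.one_right x)
      (fun _ _ _ _ _ _ h1 h2 => h1.mul_left h2)
      (fun _ _ _ _ _ _ h1 h2 => h1.mul_right h2)
      (fun _ _ _ _ h => h.inv_left) (fun _ _ _ _ h => h.inv_right)
      a.2 b.2
    exact this

end McLain
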